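/- Let T be a completely positive map on H = H_S ⊕ H_R. The subspace H_S is invariant for T if and only if the operator subspace 𝔥_S ⊕ 𝔥_{SR} (Hermitian operators whose lower-right block with respect to the decomposition is zero) is invariant under T. -/

import Mathlib

open Matrix
open scoped ComplexOrder

/-- The support `(ker X)ᗮ` of an operator. -/
noncomputable def msupp {n : Type*} [Fintype n] [DecidableEq n]
    (X : Matrix n n ℂ) : Submodule ℂ (EuclideanSpace ℂ n) :=
  (LinearMap.ker (Matrix.toEuclideanLin X))ᗮ

/-- The subspace `H_S` of `H = H_S ⊕ H_R`. -/
noncomputable def HSsub (a b : ℕ) : Submodule ℂ (EuclideanSpace ℂ (Fin a ⊕ Fin b)) :=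
  LinearMap.range (Matrix.toEuclideanLin
    (Matrix.fromBlocks 1 0 0 0 : Matrix (Fin a ⊕ Fin b) (Fin a ⊕ Fin b) ℂ))

lemma tEL_apply {n : Type*} [Fintype n] [DecidableEq n] (X : Matrix n n ℂ)
    (v : EuclideanSpace ℂ n) (i : n) :
    Matrix.toEuclideanLin X v i = ∑ j, X i j * v j := rfl

lemma mem_HSsub {a b : ℕ} (v : EuclideanSpace ℂ (Fin a ⊕ Fin b)) :
    v ∈ HSsub a b ↔ ∀ j : Fin b, v (Sum.inr j) = 0 := by
  constructor
  · rintro ⟨w, rfl⟩ j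
    simp [tEL_apply, Matrix.fromBlocks, Fintype.sum_sum_type]
  · intro h
    refine ⟨v, ?_⟩
    ext i
    rcases i with i | j
    · simp [tEL_apply, Matrix.fromBlocks, Fintype.sum_sum_type, Matrix.one_apply,
        ite_mul, Finset.sum_ite_eq]
    · simp [tEL_apply, Matrix.fromBlocks, Fintype.sum_sum_type, h j]

lemma msupp_le_iff {a b : ℕ} (X : Matrix (Fin a ⊕ Fin b) (Fin a ⊕ Fin b) ℂ) :
    msupp X ≤ HSsub a b ↔ ∀ (i : Fin a ⊕ Fin b) (j : Fin b), X i (Sum.inr j) = 0 := by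
  have key : ∀ v : EuclideanSpace ℂ (Fin a ⊕ Fin b),
      v ∈ (HSsub a b)ᗮ ↔ ∀ i : Fin a, v (Sum.inl i) = 0 := by
    intro v
    rw [Submodule.mem_orthogonal]
    constructor
    · intro hv i
      have hm : (EuclideanSpace.single (Sum.inl i) (1 : ℂ) :
          EuclideanSpace ℂ (Fin a ⊕ Fin b)) ∈ HSsub a b := by
        rw [mem_HSsub]; intro j; simp [EuclideanSpace.single_apply]
      simpa [EuclideanSpace.inner_single_left] using hv _ hm
    · intro h u hu
      rw [mem_HSsub] at hu
      have : (inner ℂ u v : ℂ) = ∑ n, (starRingEnd ℂ) (u n) * v n := by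
        simp [PiLp.inner_apply, mul_comm]
      rw [this, Fintype.sum_sum_type]
      rw [Finset.sum_eq_zero (fun i _ => by rw [h i, mul_zero]),
        Finset.sum_eq_zero (fun j _ => by rw [hu j, map_zero, zero_mul]), add_zero]
  constructor
  · intro hle i j
    have hmem : (EuclideanSpace.single (Sum.inr j) (1 : ℂ) :
        EuclideanSpace ℂ (Fin a ⊕ Fin b)) ∈ LinearMap.ker (Matrix.toEuclideanLin X) := by
      have h1 : (HSsub a b)ᗮ ≤ LinearMap.ker (Matrix.toEuclideanLin X) := by
        have := Submodule.orthogonal_le hle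
        rwa [msupp, Submodule.orthogonal_orthogonal] at this
      apply h1
      rw [key]; intro i; simp [EuclideanSpace.single_apply]
    have h0 : Matrix.toEuclideanLin X (EuclideanSpace.single (Sum.inr j) 1) = 0 :=
      hmem
    have h2 := congrFun (congrArg WithLp.ofLp h0) i
    simpa [tEL_apply, EuclideanSpace.single_apply, mul_ite, Finset.sum_ite_eq'] using h2
  · intro h
    have h1 : (HSsub a b)ᗮ ≤ LinearMap.ker (Matrix.toEuclideanLin X) := by
      intro v hv
      rw [key] at hv
      rw [LinearMap.mem_ker]
      ext i
      rw [tEL_apply, Fintype.sum_sum_type,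
        Finset.sum_eq_zero (fun i' _ => by rw [hv i', mul_zero]),
        Finset.sum_eq_zero (fun j _ => by rw [h i j, zero_mul]), add_zero]
      rfl
    calc msupp X ≤ ((HSsub a b)ᗮ)ᗮ := Submodule.orthogonal_le h1
    _ = HSsub a b := Submodule.orthogonal_orthogonal _

lemma psd_col_zero {n : Type*} [Fintype n] [DecidableEq n] {X : Matrix n n ℂ}
    (h : X.PosSemidef) {j : n} (hd : X j j = 0) : ∀ i, X i j = 0 := by
  obtain ⟨B, rfl⟩ : ∃ B : Matrix n n ℂ, X = Bᴴ * B := by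
    open scoped MatrixOrder in exact CStarAlgebra.nonneg_iff_eq_star_mul_self.mp h.nonneg
  have hB : ∀ k, B k j = 0 := by
    have hd' : ∑ k, ((Complex.normSq (B k j) : ℝ) : ℂ) = 0 := by
      simpa [Matrix.mul_apply, Matrix.conjTranspose_apply, Complex.normSq_eq_conj_mul_self]
        using hd
    rw [← Complex.ofReal_sum, Complex.ofReal_eq_zero] at hd'
    intro k
    have := (Finset.sum_eq_zero_iff_of_nonneg
      (fun k _ => Complex.normSq_nonneg (B k j))).mp hd' k (Finset.mem_univ k)
    exact Complex.normSq_eq_zero.mp this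
  intro i
  simp [Matrix.mul_apply, Matrix.conjTranspose_apply, hB]

lemma sum_mul_conj_self_zero {a b : ℕ} {ι : Type*} [Fintype ι]
    (N : ι → Matrix (Fin b) (Fin a) ℂ)
    (h : ∑ k, N k * (N k)ᴴ = 0) : ∀ k, N k = 0 := by
  have key : ∀ j : Fin b, ∑ k, ∑ i, Complex.normSq (N k j i) = 0 := by
    intro j
    have h0 := congrFun (congrFun h j) j
    have : ∑ k, ((∑ i, (Complex.normSq (N k j i) : ℂ))) = 0 := by
      simpa [Matrix.sum_apply, Matrix.mul_apply, Matrix.conjTranspose_apply,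
        Complex.mul_conj] using h0
    exact_mod_cast this
  intro k
  ext j i
  have h1 := (Finset.sum_eq_zero_iff_of_nonneg
    (fun k _ => Finset.sum_nonneg fun i _ => Complex.normSq_nonneg (N k j i))).mp
    (key j) k (Finset.mem_univ k)
  have h2 := (Finset.sum_eq_zero_iff_of_nonneg
    (fun i _ => Complex.normSq_nonneg (N k j i))).mp h1 i (Finset.mem_univ i)
  simpa using Complex.normSq_eq_zero.mp h2

lemma toBlocks22_sum {a b : ℕ} {ι : Type*} [Fintype ι]
    (f : ι → Matrix (Fin a ⊕ Fin b) (Fin a ⊕ Fin b) ℂ) :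
    (∑ k, f k).toBlocks₂₂ = ∑ k, (f k).toBlocks₂₂ := by
  ext i j
  simp [Matrix.toBlocks₂₂, Matrix.sum_apply]

/-- `H_S` is invariant for the CP map `T` iff the operator subspace
`𝔥_S ⊕ 𝔥_{SR}` (Hermitian operators with vanishing lower-right block)
is invariant under `T`. -/
theorem stmt_3 {a b K : ℕ}
    (M : Fin K → Matrix (Fin a ⊕ Fin b) (Fin a ⊕ Fin b) ℂ) :
    (∀ ρ : Matrix (Fin a ⊕ Fin b) (Fin a ⊕ Fin b) ℂ, ρ.PosSemidef →
        msupp ρ ≤ HSsub a b → msupp (∑ k, M k * ρ * (M k)ᴴ) ≤ HSsub a b) ↔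
      (∀ A : Matrix (Fin a ⊕ Fin b) (Fin a ⊕ Fin b) ℂ, A.IsHermitian →
        A.toBlocks₂₂ = 0 → (∑ k, M k * A * (M k)ᴴ).toBlocks₂₂ = 0) := by
  constructor
  · intro hL A hA hA22
    -- Step 1: the lower-left blocks of the Kraus operators vanish.
    set P : Matrix (Fin a ⊕ Fin b) (Fin a ⊕ Fin b) ℂ := Matrix.fromBlocks 1 0 0 0 with hPdef
    have hP : P.PosSemidef := by
      refine (?_ : Pᴴ * P = P) ▸ Matrix.posSemidef_conjTranspose_mul_self P
      simp [hPdef, Matrix.fromBlocks_conjTranspose, Matrix.fromBlocks_multiply]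
    have hPs : msupp P ≤ HSsub a b := by
      rw [msupp_le_iff]
      rintro (i | i) j <;> simp [hPdef]
    have h1 := (msupp_le_iff _).mp (hL P hP hPs)
    have hblk : ∀ k, (M k * P * (M k)ᴴ).toBlocks₂₂ =
        (M k).toBlocks₂₁ * ((M k).toBlocks₂₁)ᴴ := by
      intro k
      conv_lhs => rw [← Matrix.fromBlocks_toBlocks (M k)]
      simp [hPdef, Matrix.fromBlocks_conjTranspose, Matrix.fromBlocks_multiply]
    have hsum0 : ∑ k, (M k).toBlocks₂₁ * ((M k).toBlocks₂₁)ᴴ = 0 := by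
      rw [← Finset.sum_congr rfl fun k _ => hblk k, ← toBlocks22_sum]
      ext j j'
      exact h1 (Sum.inr j) j'
    have h21 : ∀ k, (M k).toBlocks₂₁ = 0 := sum_mul_conj_self_zero _ hsum0
    -- Step 2: compute the lower-right block of the image.
    rw [toBlocks22_sum]
    apply Finset.sum_eq_zero
    intro k _
    conv_lhs => rw [← Matrix.fromBlocks_toBlocks (M k), ← Matrix.fromBlocks_toBlocks A]
    simp [Matrix.fromBlocks_conjTranspose, Matrix.fromBlocks_multiply, hA22, h21 k]
  · intro hR ρ hρ hsupp
    rw [msupp_le_iff] at hsupp ⊢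
    have h22 : ρ.toBlocks₂₂ = 0 := by
      ext j j'
      exact hsupp (Sum.inr j) j'
    have hT : (∑ k, M k * ρ * (M k)ᴴ).toBlocks₂₂ = 0 := hR ρ hρ.1 h22
    have hTpsd : (∑ k, M k * ρ * (M k)ᴴ).PosSemidef := by
      exact Finset.sum_induction _ Matrix.PosSemidef (fun A B hA hB => hA.add hB)
        Matrix.PosSemidef.zero (fun k _ => hρ.mul_mul_conjTranspose_same (M k))
    intro i j
    have hdiag : (∑ k, M k * ρ * (M k)ᴴ) (Sum.inr j) (Sum.inr j) = 0 :=
      congrFun (congrFun hT j) j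
    exact psd_col_zero hTpsd hdiag i
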